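/- arXiv:0910.3888 — 4 statements merged into one kernel-verified Lean document; each statement's English description precedes it below -/
import Mathlib

section
/- Let E be a Banach space over 𝕜 (𝕜 = ℝ or ℂ), n ≥ 1, and A : E^n → 𝕜 a continuous symmetric n-linear form. Let m ≥ 1, let x_1, …, x_m ∈ E, let c ∈ 𝕜, and let ε ≥ 0 and C ≥ 0 be such that |A(x_{i_1}, …, x_{i_n}) − c| ≤ ε for every tuple (i_1, …, i_n) ∈ {1,…,m}^n of pairwise distinct indices, and |A(x_{i_1}, …, x_{i_n}) − c| ≤ C for every tuple (i_1, …, i_n) ∈ {1,…,m}^n. Then, setting y := (1/m) Σ_{i=1}^m x_i, one has |A(y, …, y) − c| ≤ ε + (1 − Π_{j=0}^{n−1} (1 − j/m)) · C. -/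
set_option maxHeartbeats 1000000

lemma prod_one_sub_div (m : ℕ) (hm : 1 ≤ m) (n : ℕ) :
    ∏ j ∈ Finset.range n, (1 - (j : ℝ) / (m : ℝ)) =
      (m.descFactorial n : ℝ) / (m : ℝ) ^ n := by
  have hm0 : (m : ℝ) ≠ 0 := by positivity
  induction n with
  | zero => simp
  | succ n ih =>
    rw [Finset.prod_range_succ, ih, Nat.descFactorial_succ]
    rcases le_or_gt n m with h | h
    · have : ((m - n : ℕ) : ℝ) = (m : ℝ) - n := by
        push_cast [h]; ring
      push_cast [this]
      field_simp
      ring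
    · have h1 : m.descFactorial n = 0 := by
        rw [Nat.descFactorial_eq_zero_iff_lt]; exact h
      simp [h1]

theorem symmetric_multilinear_average_estimate
    (𝕜 : Type*) [RCLike 𝕜] (E : Type*) [NormedAddCommGroup E] [NormedSpace 𝕜 E]
    [CompleteSpace E] (n : ℕ) (hn : 1 ≤ n)
    (A : ContinuousMultilinearMap 𝕜 (fun _ : Fin n => E) 𝕜)
    (hsymm : ∀ (σ : Equiv.Perm (Fin n)) (v : Fin n → E), A (fun j => v (σ j)) = A v)
    (m : ℕ) (hm : 1 ≤ m) (x : Fin m → E) (c : 𝕜) (ε C : ℝ) (hε : 0 ≤ ε) (hC : 0 ≤ C)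
    (hinj : ∀ f : Fin n → Fin m, Function.Injective f → ‖A (fun j => x (f j)) - c‖ ≤ ε)
    (hall : ∀ f : Fin n → Fin m, ‖A (fun j => x (f j)) - c‖ ≤ C) :
    ‖A (fun _ => (m : 𝕜)⁻¹ • ∑ i : Fin m, x i) - c‖
      ≤ ε + (1 - ∏ j ∈ Finset.range n, (1 - (j : ℝ) / (m : ℝ))) * C := by
  classical
  have hm0 : (m : ℝ) ≠ 0 := by positivity
  have hmk : (m : 𝕜) ≠ 0 := by
    exact_mod_cast Nat.cast_ne_zero.mpr (by omega)
  -- expand A at the average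
  have h1 : A (fun _ => (m : 𝕜)⁻¹ • ∑ i : Fin m, x i)
      = ((m : 𝕜)⁻¹) ^ n • ∑ f : Fin n → Fin m, A (fun j => x (f j)) := by
    have := A.map_smul_univ (fun _ : Fin n => (m : 𝕜)⁻¹) (fun _ => ∑ i : Fin m, x i)
    rw [this, Finset.prod_const, Finset.card_univ, Fintype.card_fin]
    congr 1
    exact A.map_sum (fun (_ : Fin n) (j : Fin m) => x j)
  have hcard : Fintype.card (Fin n → Fin m) = m ^ n := by
    simp [Fintype.card_fun]
  have h2 : A (fun _ => (m : 𝕜)⁻¹ • ∑ i : Fin m, x i) - c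
      = ((m : 𝕜)⁻¹) ^ n • ∑ f : Fin n → Fin m, (A (fun j => x (f j)) - c) := by
    rw [h1, Finset.sum_sub_distrib, Finset.sum_const, Finset.card_univ, hcard, smul_sub]
    congr 1
    rw [nsmul_eq_mul, smul_eq_mul]
    push_cast
    field_simp
    rw [one_div, mul_assoc, ← mul_pow, inv_mul_cancel₀ hmk, one_pow, mul_one]
  rw [h2]
  -- norm bound
  set I : Finset (Fin n → Fin m) :=
    Finset.univ.filter (fun f : Fin n → Fin m => Function.Injective f) with hI
  have hIcard : I.card = m.descFactorial n := by
    rw [hI, ← Fintype.card_subtype]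
    rw [Fintype.card_congr (Equiv.subtypeInjectiveEquivEmbedding (Fin n) (Fin m))]
    rw [Fintype.card_embedding_eq]
    simp
  have hnorm : ‖((m : 𝕜)⁻¹) ^ n • ∑ f : Fin n → Fin m, (A (fun j => x (f j)) - c)‖
      ≤ ((m : ℝ)⁻¹) ^ n * (I.card * ε + ((m ^ n : ℕ) - I.card : ℝ) * C) := by
    rw [norm_smul, norm_pow, norm_inv, RCLike.norm_natCast]
    apply mul_le_mul_of_nonneg_left _ (by positivity)
    calc ‖∑ f : Fin n → Fin m, (A (fun j => x (f j)) - c)‖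
        ≤ ∑ f : Fin n → Fin m, ‖A (fun j => x (f j)) - c‖ := norm_sum_le _ _
      _ = ∑ f ∈ I, ‖A (fun j => x (f j)) - c‖
          + ∑ f ∈ Iᶜ, ‖A (fun j => x (f j)) - c‖ := by
          rw [Finset.sum_add_sum_compl]
      _ ≤ ∑ f ∈ I, ε + ∑ f ∈ Iᶜ, C := by
          apply add_le_add
          · exact Finset.sum_le_sum fun f hf => hinj f (by simpa [hI] using hf)
          · exact Finset.sum_le_sum fun f _ => hall f
      _ = I.card * ε + ((m ^ n : ℕ) - I.card : ℝ) * C := by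
          rw [Finset.sum_const, Finset.sum_const, Finset.card_compl, hcard]
          have : I.card ≤ m ^ n := by rw [← hcard]; exact Finset.card_le_univ I
          rw [nsmul_eq_mul, nsmul_eq_mul, Nat.cast_sub this]
  refine hnorm.trans ?_
  rw [prod_one_sub_div m hm n, hIcard]
  set D : ℝ := (m.descFactorial n : ℝ) with hD
  have hDnn : 0 ≤ D := by positivity
  have hDle : D ≤ (m : ℝ) ^ n := by
    rw [hD]
    exact_mod_cast Nat.descFactorial_le_pow m n
  have hmpos : (0:ℝ) < (m:ℝ) ^ n := by positivity
  have : ((m : ℝ)⁻¹) ^ n * (D * ε + ((m ^ n : ℕ) - D : ℝ) * C)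
      = (D / (m:ℝ)^n) * ε + (1 - D / (m:ℝ)^n) * C := by
    push_cast
    field_simp
    rw [one_div, ← mul_pow, inv_mul_cancel₀ hm0, one_pow, one_mul]
  rw [this]
  have hfrac : D / (m:ℝ)^n ≤ 1 := by
    rw [div_le_one hmpos]; exact hDle
  have h3 : (D / (m:ℝ)^n) * ε ≤ ε := by
    nlinarith
  linarith
end

section
/- Let E and F be Banach spaces over 𝕜 (𝕜 = ℝ or ℂ), I a nonempty index set, and 𝔘 an ultrafilter on I. If T : E → F is an approximable operator (i.e., T lies in the operator-norm closure of the finite-rank continuous linear operators from E to F), then the ultrapower operator (T)_𝔘 : (E)_𝔘 → (F)_𝔘 is also approximable, i.e., it lies in the operator-norm closure of the finite-rank continuous linear operators from (E)_𝔘 to (F)_𝔘. -/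
set_option synthInstance.maxHeartbeats 1000000
set_option maxHeartbeats 1000000

open Filter Topology ENNReal NormedSpace

noncomputable section

variable (𝕜 : Type*) [RCLike 𝕜]

/-- The Banach space `ℓ∞(I, E)` of bounded families in `E` indexed by `I`,
with the supremum norm. -/
abbrev BoundedFamilies (I E : Type*) [NormedAddCommGroup E] : Type _ :=
  lp (fun _ : I => E) ⊤

/-- The constant family `(x)_{i ∈ I}`, as an element of `ℓ∞(I, E)`. -/
def constFamily (I : Type*) {E : Type*} [NormedAddCommGroup E] (x : E) :
    BoundedFamilies I E :=
  ⟨fun _ => x, memℓp_infty ⟨‖x‖, by rintro r ⟨i, rfl⟩; exact le_rfl⟩⟩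

/-- The subspace `N_𝔘 = {x ∈ ℓ∞(I,E) : lim_{i,𝔘} ‖x_i‖ = 0}`. -/
def ultraNullSubmodule (I : Type*) (𝔘 : Ultrafilter I) (E : Type*) [NormedAddCommGroup E]
    [NormedSpace 𝕜 E] : Submodule 𝕜 (BoundedFamilies I E) where
  carrier := {x | Tendsto (fun i => ‖x i‖) (𝔘 : Filter I) (𝓝 0)}
  zero_mem' := by
    simpa [lp.coeFn_zero] using (tendsto_const_nhds :
      Tendsto (fun _ : I => (0 : ℝ)) (𝔘 : Filter I) (𝓝 0))
  add_mem' := by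
    intro x y hx hy
    refine squeeze_zero (fun i => norm_nonneg _) (fun i => ?_) (by simpa using hx.add hy)
    have : (↑(x + y) : ∀ _ : I, _) = fun i => x i + y i := by
      rw [lp.coeFn_add]; rfl
    rw [this]
    exact norm_add_le _ _
  smul_mem' := by
    intro c x hx
    have h := hx.const_mul ‖c‖
    refine squeeze_zero (fun i => norm_nonneg _) (fun i => ?_) (by simpa using h)
    have : (↑(c • x) : ∀ _ : I, _) = fun i => c • x i := by
      rw [lp.coeFn_smul]; rfl
    rw [this]
    simp [norm_smul]

/-- The ultrapower `(E)_𝔘 = ℓ∞(I,E) / N_𝔘`, with the quotient norm. -/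
abbrev Ultrapower (I : Type*) (𝔘 : Ultrafilter I) (E : Type*) [NormedAddCommGroup E]
    [NormedSpace 𝕜 E] : Type _ :=
  BoundedFamilies I E ⧸ ultraNullSubmodule 𝕜 I 𝔘 E

/-- The quotient map `q_E : ℓ∞(I,E) → (E)_𝔘`. -/
def ultrapowerQuot (I : Type*) (𝔘 : Ultrafilter I) (E : Type*) [NormedAddCommGroup E]
    [NormedSpace 𝕜 E] (x : BoundedFamilies I E) : Ultrapower 𝕜 I 𝔘 E :=
  Submodule.Quotient.mk (p := ultraNullSubmodule 𝕜 I 𝔘 E) x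

/-- The canonical embedding `h_E : E → (E)_𝔘`, sending `x` to the class of the
constant family `(x)_{i ∈ I}`. -/
def diagonalEmbedding (I : Type*) (𝔘 : Ultrafilter I) (E : Type*) [NormedAddCommGroup E]
    [NormedSpace 𝕜 E] (x : E) : Ultrapower 𝕜 I 𝔘 E :=
  ultrapowerQuot 𝕜 I 𝔘 E (constFamily I x)

/-- The map `ℓ∞(I,E) → ℓ∞(I,F)` applying `T` coordinatewise: `(x_i)_i ↦ (T x_i)_i`
(a bounded family is mapped to a bounded family). -/
def lpInftyMap {I E F : Type*} [NormedAddCommGroup E] [NormedSpace 𝕜 E]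
    [NormedAddCommGroup F] [NormedSpace 𝕜 F] (T : E →L[𝕜] F)
    (x : BoundedFamilies I E) : BoundedFamilies I F :=
  ⟨fun i => T (x i), by
    obtain ⟨B, hB⟩ := memℓp_infty_iff.1 (lp.memℓp x)
    refine memℓp_infty ⟨‖T‖ * B, ?_⟩
    rintro r ⟨i, rfl⟩
    exact (T.le_opNorm _).trans
      (mul_le_mul_of_nonneg_left (hB (Set.mem_range_self i)) (norm_nonneg _))⟩

/-- An operator is *approximable* if it lies in the operator-norm closure of the
finite-rank continuous linear operators. -/
def IsApproximable {𝕜 E F : Type*} [RCLike 𝕜] [SeminormedAddCommGroup E] [NormedSpace 𝕜 E]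
    [SeminormedAddCommGroup F] [NormedSpace 𝕜 F] (T : E →L[𝕜] F) : Prop :=
  T ∈ closure {S : E →L[𝕜] F | FiniteDimensional 𝕜 (LinearMap.range (S : E →ₗ[𝕜] F))}


section UpMap

variable {𝕜 : Type*} [RCLike 𝕜] {M N : Type*} [SeminormedAddCommGroup M] [NormedSpace 𝕜 M]
  [SeminormedAddCommGroup N] [NormedSpace 𝕜 N]

theorem quot_norm_bound (S : Submodule 𝕜 M) (g : M ⧸ S →ₗ[𝕜] N) (C : ℝ) (hC : 0 ≤ C)
    (h : ∀ x : M, ‖g (Submodule.Quotient.mk x)‖ ≤ C * ‖x‖) (q : M ⧸ S) :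
    ‖g q‖ ≤ C * ‖q‖ := by
  refine le_of_forall_pos_le_add fun ε hε => ?_
  have hδ : (0:ℝ) < ε / (C + 1) := div_pos hε (by linarith)
  obtain ⟨m, hm, hmn⟩ := Submodule.Quotient.norm_mk_lt q hδ
  calc ‖g q‖ = ‖g (Submodule.Quotient.mk m)‖ := by rw [hm]
    _ ≤ C * ‖m‖ := h m
    _ ≤ C * (‖q‖ + ε / (C + 1)) := by nlinarith [norm_nonneg m, Submodule.Quotient.norm_mk_le S m]
    _ ≤ C * ‖q‖ + ε := by
        have : C * (ε / (C + 1)) ≤ ε := by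
          rw [mul_div_assoc']
          exact (div_le_iff₀ (by linarith)).2 (by nlinarith)
        linarith [mul_add C ‖q‖ (ε / (C+1))]

variable {𝕂 : Type*} [RCLike 𝕂] {I : Type*} [Nonempty I] (𝔘 : Ultrafilter I)
  {E F : Type*} [NormedAddCommGroup E] [NormedSpace 𝕂 E] [NormedAddCommGroup F] [NormedSpace 𝕂 F]

@[simp] theorem lpInftyMap_apply (T : E →L[𝕂] F) (x : BoundedFamilies I E) (i : I) :
    (lpInftyMap 𝕂 T x : ∀ _ : I, F) i = T (x i) := rfl

theorem lpInftyMap_sub (T R : E →L[𝕂] F) (x : BoundedFamilies I E) :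
    lpInftyMap 𝕂 (T - R) x = lpInftyMap 𝕂 T x - lpInftyMap 𝕂 R x := by
  apply lp.ext
  rw [lp.coeFn_sub]
  funext i
  simp [lpInftyMap]

theorem lpInftyMap_norm_le (T : E →L[𝕂] F) (x : BoundedFamilies I E) :
    ‖lpInftyMap 𝕂 T x‖ ≤ ‖T‖ * ‖x‖ := by
  refine lp.norm_le_of_forall_le (by positivity) fun i => ?_
  calc ‖T (x i)‖ ≤ ‖T‖ * ‖x i‖ := T.le_opNorm _
    _ ≤ ‖T‖ * ‖x‖ := by
        have := lp.norm_apply_le_norm (p := (⊤ : ℝ≥0∞)) (by simp) x i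
        nlinarith [norm_nonneg T]

theorem lpInftyMap_mem_null (T : E →L[𝕂] F) {x : BoundedFamilies I E}
    (hx : x ∈ ultraNullSubmodule 𝕂 I 𝔘 E) :
    lpInftyMap 𝕂 T x ∈ ultraNullSubmodule 𝕂 I 𝔘 F := by
  have hx' : Filter.Tendsto (fun i => ‖x i‖) (𝔘 : Filter I) (nhds 0) := hx
  refine squeeze_zero (fun i => norm_nonneg _) (fun i => T.le_opNorm (x i)) ?_
  simpa using hx'.const_mul ‖T‖

/-- Coordinatewise application as a linear map. -/
def lpInftyLinear (T : E →L[𝕂] F) : BoundedFamilies I E →ₗ[𝕂] BoundedFamilies I F where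
  toFun := lpInftyMap 𝕂 T
  map_add' := fun x y => by
    apply lp.ext
    rw [lp.coeFn_add]
    funext i
    have : (((x + y : BoundedFamilies I E)) : ∀ _ : I, E) i = x i + y i := by
      rw [lp.coeFn_add]; rfl
    simp [lpInftyMap, this]
  map_smul' := fun c x => by
    apply lp.ext
    rw [lp.coeFn_smul]
    funext i
    have : (((c • x : BoundedFamilies I E)) : ∀ _ : I, E) i = c • x i := by
      rw [lp.coeFn_smul]; rfl
    simp [lpInftyMap, this]

/-- The ultrapower operator as a linear map. -/
def upLinear (T : E →L[𝕂] F) : Ultrapower 𝕂 I 𝔘 E →ₗ[𝕂] Ultrapower 𝕂 I 𝔘 F :=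
  Submodule.liftQ (ultraNullSubmodule 𝕂 I 𝔘 E)
    ((ultraNullSubmodule 𝕂 I 𝔘 F).mkQ.comp (lpInftyLinear T))
    (by
      intro x hx
      simp only [LinearMap.mem_ker, LinearMap.comp_apply, Submodule.mkQ_apply]
      exact (Submodule.Quotient.mk_eq_zero _).2 (lpInftyMap_mem_null 𝔘 T hx))

@[simp] theorem upLinear_mk (T : E →L[𝕂] F) (x : BoundedFamilies I E) :
    upLinear 𝔘 T (ultrapowerQuot 𝕂 I 𝔘 E x) = ultrapowerQuot 𝕂 I 𝔘 F (lpInftyMap 𝕂 T x) := by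
  simp [upLinear, ultrapowerQuot, lpInftyLinear]

theorem upLinear_norm_le (T : E →L[𝕂] F) (q : Ultrapower 𝕂 I 𝔘 E) :
    ‖upLinear 𝔘 T q‖ ≤ ‖T‖ * ‖q‖ := by
  refine quot_norm_bound _ _ _ (norm_nonneg T) (fun x => ?_) q
  calc ‖upLinear 𝔘 T (Submodule.Quotient.mk x)‖
      = ‖ultrapowerQuot 𝕂 I 𝔘 F (lpInftyMap 𝕂 T x)‖ := congrArg norm (upLinear_mk 𝔘 T x)
    _ ≤ ‖lpInftyMap 𝕂 T x‖ := Submodule.Quotient.norm_mk_le _ _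
    _ ≤ ‖T‖ * ‖x‖ := lpInftyMap_norm_le T x

/-- The ultrapower operator. -/
def upMap (T : E →L[𝕂] F) : Ultrapower 𝕂 I 𝔘 E →L[𝕂] Ultrapower 𝕂 I 𝔘 F :=
  (upLinear 𝔘 T).mkContinuous ‖T‖ (upLinear_norm_le 𝔘 T)

@[simp] theorem upMap_mk (T : E →L[𝕂] F) (x : BoundedFamilies I E) :
    upMap 𝔘 T (ultrapowerQuot 𝕂 I 𝔘 E x) = ultrapowerQuot 𝕂 I 𝔘 F (lpInftyMap 𝕂 T x) :=
  upLinear_mk 𝔘 T x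

theorem upMap_norm_le (T : E →L[𝕂] F) : ‖upMap 𝔘 T‖ ≤ ‖T‖ :=
  LinearMap.mkContinuous_norm_le _ (norm_nonneg T) _

theorem upMap_sub (T R : E →L[𝕂] F) : upMap 𝔘 T - upMap 𝔘 R = upMap 𝔘 (T - R) := by
  apply ContinuousLinearMap.ext
  intro q
  obtain ⟨x, rfl⟩ := Submodule.Quotient.mk_surjective _ q
  have hx : (Submodule.Quotient.mk x : Ultrapower 𝕂 I 𝔘 E) = ultrapowerQuot 𝕂 I 𝔘 E x := rfl
  rw [hx, ContinuousLinearMap.sub_apply, upMap_mk, upMap_mk, upMap_mk, lpInftyMap_sub]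
  exact (Submodule.Quotient.mk_sub _).symm

/-- The diagonal embedding as a linear map. -/
def diagLinear : F →ₗ[𝕂] Ultrapower 𝕂 I 𝔘 F where
  toFun := diagonalEmbedding 𝕂 I 𝔘 F
  map_add' x y := by
    unfold diagonalEmbedding ultrapowerQuot
    rw [← Submodule.Quotient.mk_add]
    congr 1
  map_smul' c x := by
    unfold diagonalEmbedding ultrapowerQuot
    rw [RingHom.id_apply, ← Submodule.Quotient.mk_smul]
    congr 1

theorem upMap_finiteRank [CompleteSpace F] (R : E →L[𝕂] F)
    (hR : FiniteDimensional 𝕂 (LinearMap.range (R : E →ₗ[𝕂] F))) :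
    FiniteDimensional 𝕂
      (LinearMap.range ((upMap 𝔘 R : Ultrapower 𝕂 I 𝔘 E →L[𝕂] Ultrapower 𝕂 I 𝔘 F) :
        Ultrapower 𝕂 I 𝔘 E →ₗ[𝕂] Ultrapower 𝕂 I 𝔘 F)) := by
  haveI := hR
  set G := LinearMap.range (R : E →ₗ[𝕂] F) with hG
  have key : ∀ q : Ultrapower 𝕂 I 𝔘 E, ∃ y ∈ G, upMap 𝔘 R q = diagLinear 𝔘 y := by
    intro q
    obtain ⟨x, rfl⟩ := Submodule.Quotient.mk_surjective _ q
    set g : I → G := fun i => ⟨R (x i), LinearMap.mem_range_self _ _⟩ with hg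
    have hgb : ∀ i, g i ∈ Metric.closedBall (0 : G) (‖R‖ * ‖x‖) := by
      intro i
      rw [Metric.mem_closedBall, dist_zero_right]
      have h1 : ‖g i‖ = ‖R (x i)‖ := rfl
      rw [h1]
      calc ‖R (x i)‖ ≤ ‖R‖ * ‖x i‖ := R.le_opNorm _
        _ ≤ ‖R‖ * ‖x‖ := by
            have := lp.norm_apply_le_norm (p := (⊤ : ENNReal)) (by simp) x i
            nlinarith [norm_nonneg R]
    have hK : IsCompact (Metric.closedBall (0 : G) (‖R‖ * ‖x‖)) :=
      isCompact_closedBall _ _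
    obtain ⟨y₀, _, hy₀⟩ := hK.ultrafilter_le_nhds (𝔘.map g) (by
      rw [Filter.le_principal_iff, Ultrafilter.coe_map, Filter.mem_map]
      exact Filter.univ_mem' hgb)
    have htend : Filter.Tendsto g (𝔘 : Filter I) (nhds y₀) := by
      rwa [Ultrafilter.coe_map] at hy₀
    have htendF : Filter.Tendsto (fun i => R (x i)) (𝔘 : Filter I) (nhds (y₀ : F)) :=
      ((continuous_subtype_val.tendsto y₀).comp htend)
    refine ⟨(y₀ : F), y₀.property, ?_⟩
    have hmem : lpInftyMap 𝕂 R x - constFamily I (y₀ : F) ∈ ultraNullSubmodule 𝕂 I 𝔘 F := by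
      have hnorm : Filter.Tendsto (fun i => ‖R (x i) - (y₀ : F)‖) (𝔘 : Filter I) (nhds 0) :=
        tendsto_iff_norm_sub_tendsto_zero.1 htendF
      have hcoe : ∀ i, ((lpInftyMap 𝕂 R x - constFamily I (y₀ : F) : BoundedFamilies I F) :
          ∀ _ : I, F) i = R (x i) - (y₀ : F) := by
        intro i
        rw [lp.coeFn_sub]
        rfl
      show Filter.Tendsto
        (fun i => ‖((lpInftyMap 𝕂 R x - constFamily I (y₀ : F)) : ∀ _ : I, F) i‖)
        (𝔘 : Filter I) (nhds 0)
      exact hnorm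
    have hx : (Submodule.Quotient.mk x : Ultrapower 𝕂 I 𝔘 E) = ultrapowerQuot 𝕂 I 𝔘 E x := rfl
    rw [hx, upMap_mk]
    exact (Submodule.Quotient.eq _).2 hmem
  have hle : LinearMap.range ((upMap 𝔘 R :
      Ultrapower 𝕂 I 𝔘 E →L[𝕂] Ultrapower 𝕂 I 𝔘 F) :
      Ultrapower 𝕂 I 𝔘 E →ₗ[𝕂] Ultrapower 𝕂 I 𝔘 F) ≤ G.map (diagLinear 𝔘) := by
    rintro _ ⟨q, rfl⟩
    obtain ⟨y, hy, h⟩ := key q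
    exact ⟨y, hy, h.symm⟩
  haveI : FiniteDimensional 𝕂 (G.map (diagLinear 𝔘)) := Module.Finite.map G (diagLinear 𝔘)
  exact Submodule.finiteDimensional_of_le hle

end UpMap

theorem ultrapower_operator_of_approximable_isApproximable
    (𝕜 : Type*) [RCLike 𝕜] (I : Type*) [Nonempty I] (𝔘 : Ultrafilter I)
    (E : Type*) [NormedAddCommGroup E] [NormedSpace 𝕜 E] [CompleteSpace E]
    (F : Type*) [NormedAddCommGroup F] [NormedSpace 𝕜 F] [CompleteSpace F]
    (T : E →L[𝕜] F) (hT : IsApproximable T)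
    (S : Ultrapower 𝕜 I 𝔘 E →L[𝕜] Ultrapower 𝕜 I 𝔘 F)
    (hS : ∀ x : BoundedFamilies I E,
      S (ultrapowerQuot 𝕜 I 𝔘 E x) = ultrapowerQuot 𝕜 I 𝔘 F (lpInftyMap 𝕜 T x)) :
    IsApproximable S := by
  have hS' : S = upMap 𝔘 T := by
    apply ContinuousLinearMap.ext
    intro q
    obtain ⟨x, rfl⟩ := Submodule.Quotient.mk_surjective _ q
    have hx : (Submodule.Quotient.mk x : Ultrapower 𝕜 I 𝔘 E) = ultrapowerQuot 𝕜 I 𝔘 E x := rfl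
    rw [hx, hS x, upMap_mk]
  subst hS'
  have hT' : ∀ ε > 0, ∃ R ∈ {S : E →L[𝕜] F |
      FiniteDimensional 𝕜 (LinearMap.range (S : E →ₗ[𝕜] F))}, dist T R < ε :=
    Metric.mem_closure_iff.1 hT
  refine Metric.mem_closure_iff.2 fun ε hε => ?_
  obtain ⟨R, hRmem, hRd⟩ := hT' ε hε
  refine ⟨upMap 𝔘 R, upMap_finiteRank 𝔘 R hRmem, ?_⟩
  calc dist (upMap 𝔘 T) (upMap 𝔘 R) = ‖upMap 𝔘 T - upMap 𝔘 R‖ := by exact dist_eq_norm (upMap 𝔘 T) (upMap 𝔘 R)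
    _ = ‖upMap 𝔘 (T - R)‖ := by rw [upMap_sub]
    _ ≤ ‖T - R‖ := upMap_norm_le 𝔘 (T - R)
    _ = dist T R := (dist_eq_norm T R).symm
    _ < ε := hRd
end
end

section
/- Let E be a Banach space over 𝕜 (𝕜 = ℝ or ℂ), I a nonempty index set, 𝔘 an ultrafilter on I, n ≥ 1, A : E^n → 𝕜 a continuous symmetric n-linear form, and P(x) := A(x, …, x) the associated continuous n-homogeneous polynomial. Let Ā be the iterated extension of A to the ultrapower (E)_𝔘 (the unique continuous n-linear form on (E)_𝔘 satisfying: (a) Ā(h_E x_1, …, h_E x_n) = A(x_1, …, x_n) for all x_1, …, x_n ∈ E; and (b) for every 1 ≤ j ≤ n, all x_1, …, x_{j−1} ∈ E, every bounded family y = (y_i)_{i∈I} in E, and all z_{j+1}, …, z_n ∈ (E)_𝔘, Ā(h_E x_1, …, h_E x_{j−1}, q_E y, z_{j+1}, …, z_n) = lim_{i,𝔘} Ā(h_E x_1, …, h_E x_{j−1}, h_E y_i, z_{j+1}, …, z_n)), and set P̄(z) := Ā(z, …, z). Then the uniform norms coincide: sup{|P̄(z)| : z ∈ (E)_𝔘,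 ‖z‖ ≤ 1} = sup{|P(x)| : x ∈ E, ‖x‖ ≤ 1}. -/
set_option synthInstance.maxHeartbeats 1000000
set_option maxHeartbeats 1000000

open Filter Topology ENNReal NormedSpace

noncomputable section

variable (𝕜 : Type*) [RCLike 𝕜]

/-- `Abar` is the *iterated extension* of the continuous `n`-linear form `A` to the
ultrapower `(E)_𝔘`: it agrees with `A` on (the image under `h_E` of) `E`, and it is
obtained by iterated limits along `𝔘`, one variable at a time, from the last variable
to the first. -/
def IsIteratedExtension {𝕜 : Type*} [RCLike 𝕜] {I : Type*} {𝔘 : Ultrafilter I}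
    {E : Type*} [NormedAddCommGroup E] [NormedSpace 𝕜 E] {n : ℕ}
    (A : ContinuousMultilinearMap 𝕜 (fun _ : Fin n => E) 𝕜)
    (Abar : ContinuousMultilinearMap 𝕜 (fun _ : Fin n => Ultrapower 𝕜 I 𝔘 E) 𝕜) : Prop :=
  (∀ x : Fin n → E, Abar (fun j => diagonalEmbedding 𝕜 I 𝔘 E (x j)) = A x) ∧
  (∀ (j : Fin n) (x : Fin n → E) (y : BoundedFamilies I E)
      (z : Fin n → Ultrapower 𝕜 I 𝔘 E),
    Tendsto
      (fun i => Abar (fun l => if l < j then diagonalEmbedding 𝕜 I 𝔘 E (x l)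
        else if l = j then diagonalEmbedding 𝕜 I 𝔘 E (y i) else z l))
      (𝔘 : Filter I)
      (𝓝 (Abar (fun l => if l < j then diagonalEmbedding 𝕜 I 𝔘 E (x l)
        else if l = j then ultrapowerQuot 𝕜 I 𝔘 E y else z l))))

section AuxProofs

variable {𝕜}

variable {I : Type*} [Nonempty I] {𝔘 : Ultrafilter I}
  {E : Type*} [NormedAddCommGroup E] [NormedSpace 𝕜 E] {n : ℕ}

/-- Auxiliary: the family plugged into `Abar` in the iterated-limit condition. -/
def GGaux (𝕜 : Type*) [RCLike 𝕜] {I : Type*} (𝔘 : Ultrafilter I) {E : Type*}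
    [NormedAddCommGroup E] [NormedSpace 𝕜 E] {n : ℕ}
    (y : BoundedFamilies I E) (v : Fin n → E) (j : Fin n)
    (u : Ultrapower 𝕜 I 𝔘 E) : Fin n → Ultrapower 𝕜 I 𝔘 E := fun l =>
  if l < j then diagonalEmbedding 𝕜 I 𝔘 E (v l)
  else if l = j then u else ultrapowerQuot 𝕜 I 𝔘 E y

theorem GGaux_congr {I : Type*} {𝔘 : Ultrafilter I} {E : Type*}
    [NormedAddCommGroup E] [NormedSpace 𝕜 E] {n : ℕ}
    {y : BoundedFamilies I E} {v v' : Fin n → E} {j : Fin n}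
    {u : Ultrapower 𝕜 I 𝔘 E} (h : ∀ l, l < j → v l = v' l) :
    GGaux 𝕜 𝔘 y v j u = GGaux 𝕜 𝔘 y v' j u := by
  funext l
  unfold GGaux
  by_cases hl : l < j
  · simp [hl, h l hl]
  · simp [hl]

theorem key_bound (hn : 1 ≤ n)
    (A : ContinuousMultilinearMap 𝕜 (fun _ : Fin n => E) 𝕜)
    (hsymm : ∀ (σ : Equiv.Perm (Fin n)) (v : Fin n → E), A (fun j => v (σ j)) = A v)
    (Abar : ContinuousMultilinearMap 𝕜 (fun _ : Fin n => Ultrapower 𝕜 I 𝔘 E) 𝕜)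
    (hAbar : IsIteratedExtension A Abar)
    (y : BoundedFamilies I E) (hy : ∀ i, ‖y i‖ ≤ 1)
    {C : ℝ} (hC : ∀ e : E, ‖e‖ ≤ 1 → ‖A (fun _ => e)‖ ≤ C) :
    ‖Abar (fun _ => ultrapowerQuot 𝕜 I 𝔘 E y)‖ ≤ C := by
  classical
  have hn' : (0:ℝ) < (n:ℝ) := by exact_mod_cast hn
  have main : ∀ ε : ℝ, 0 < ε → ‖Abar (fun _ => ultrapowerQuot 𝕜 I 𝔘 E y)‖ ≤ C + ε := by
    intro ε hε
    set ε₀ : ℝ := ε / n with hε₀def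
    have hε₀ : 0 < ε₀ := div_pos hε hn'
    -- one-step choice lemma
    have step : ∀ (x : ℕ → E) (k : ℕ), ∃ e : E, ‖e‖ ≤ 1 ∧ ∀ (j : Fin n) (t : Fin n → ℕ),
        (∀ l : Fin n, (l : ℕ) < (j : ℕ) → t l < k) →
        ‖Abar (GGaux 𝕜 𝔘 y (fun l => x (t l)) j (diagonalEmbedding 𝕜 I 𝔘 E e)) -
          Abar (GGaux 𝕜 𝔘 y (fun l => x (t l)) j (ultrapowerQuot 𝕜 I 𝔘 E y))‖ ≤ ε₀ := by
      intro x k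
      have hev : ∀ᶠ i in (𝔘 : Filter I), ∀ (j : Fin n) (t' : Fin n → Fin (k+1)),
          ‖Abar (GGaux 𝕜 𝔘 y (fun l => x ((t' l : ℕ))) j
              (diagonalEmbedding 𝕜 I 𝔘 E (y i))) -
            Abar (GGaux 𝕜 𝔘 y (fun l => x ((t' l : ℕ))) j
              (ultrapowerQuot 𝕜 I 𝔘 E y))‖ < ε₀ := by
        rw [Filter.eventually_all]
        intro j
        rw [Filter.eventually_all]
        intro t'
        have ht : Tendsto
            (fun i => Abar (GGaux 𝕜 𝔘 y (fun l => x ((t' l : ℕ))) j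
              (diagonalEmbedding 𝕜 I 𝔘 E (y i)))) (𝔘 : Filter I)
            (𝓝 (Abar (GGaux 𝕜 𝔘 y (fun l => x ((t' l : ℕ))) j
              (ultrapowerQuot 𝕜 I 𝔘 E y)))) :=
          hAbar.2 j (fun l => x ((t' l : ℕ))) y
            (fun _ => ultrapowerQuot 𝕜 I 𝔘 E y)
        have ht' := Metric.tendsto_nhds.1 ht ε₀ hε₀
        refine ht'.mono fun i hi => ?_
        rwa [dist_eq_norm] at hi
      obtain ⟨i, hi⟩ := hev.exists
      refine ⟨y i, hy i, ?_⟩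
      intro j t ht
      set t' : Fin n → Fin (k+1) := fun l =>
        if hl : (l : ℕ) < (j : ℕ) then ⟨t l, Nat.lt_succ_of_lt (ht l hl)⟩
        else ⟨0, Nat.succ_pos k⟩ with ht'def
      have hcongr : ∀ l : Fin n, l < j → (fun l => x (t l)) l = (fun l => x ((t' l : ℕ))) l := by
        intro l hl
        have hl' : (l : ℕ) < (j : ℕ) := Fin.lt_def.1 hl
        simp only [ht'def, hl', dif_pos]
      rw [GGaux_congr (u := diagonalEmbedding 𝕜 I 𝔘 E (y i)) hcongr,
        GGaux_congr (u := ultrapowerQuot 𝕜 I 𝔘 E y) hcongr]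
      exact (hi j t').le
    -- sequence of good points
    have seq : ∀ m : ℕ, ∃ x : ℕ → E, ∀ k, k < m → ‖x k‖ ≤ 1 ∧
        ∀ (j : Fin n) (t : Fin n → ℕ),
        (∀ l : Fin n, (l : ℕ) < (j : ℕ) → t l < k) →
        ‖Abar (GGaux 𝕜 𝔘 y (fun l => x (t l)) j (diagonalEmbedding 𝕜 I 𝔘 E (x k))) -
          Abar (GGaux 𝕜 𝔘 y (fun l => x (t l)) j (ultrapowerQuot 𝕜 I 𝔘 E y))‖ ≤ ε₀ := by
      intro m
      induction m with
      | zero => exact ⟨fun _ => 0, fun k hk => absurd hk (Nat.not_lt_zero k)⟩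
      | succ m ih =>
        obtain ⟨x, hx⟩ := ih
        obtain ⟨e, he1, he2⟩ := step x m
        refine ⟨Function.update x m e, fun k hk => ?_⟩
        have hupd : ∀ a : ℕ, a < m → Function.update x m e a = x a := fun a ha =>
          Function.update_of_ne (by omega) e x
        rcases Nat.lt_succ_iff_lt_or_eq.1 hk with hk' | rfl
        · obtain ⟨hx1, hx2⟩ := hx k hk'
          refine ⟨by rw [hupd k hk']; exact hx1, fun j t ht => ?_⟩
          have hc : ∀ l : Fin n, l < j →
              (fun l => Function.update x m e (t l)) l = (fun l => x (t l)) l := fun l hl =>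
            hupd (t l) ((ht l (Fin.lt_def.1 hl)).trans hk')
          rw [GGaux_congr (u := diagonalEmbedding 𝕜 I 𝔘 E (Function.update x m e k)) hc,
            GGaux_congr (u := ultrapowerQuot 𝕜 I 𝔘 E y) hc, hupd k hk']
          exact hx2 j t ht
        · refine ⟨by rw [Function.update_self]; exact he1, fun j t ht => ?_⟩
          have hc : ∀ l : Fin n, l < j →
              (fun l => Function.update x k e (t l)) l = (fun l => x (t l)) l := fun l hl =>
            hupd (t l) (ht l (Fin.lt_def.1 hl))
          rw [GGaux_congr (u := diagonalEmbedding 𝕜 I 𝔘 E (Function.update x k e k)) hc,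
            GGaux_congr (u := ultrapowerQuot 𝕜 I 𝔘 E y) hc, Function.update_self]
          exact he2 j t ht
    -- telescoping
    have tel : ∀ (x : ℕ → E) (m : ℕ),
        (∀ k, k < m → ‖x k‖ ≤ 1 ∧ ∀ (j : Fin n) (t : Fin n → ℕ),
          (∀ l : Fin n, (l : ℕ) < (j : ℕ) → t l < k) →
          ‖Abar (GGaux 𝕜 𝔘 y (fun l => x (t l)) j (diagonalEmbedding 𝕜 I 𝔘 E (x k))) -
            Abar (GGaux 𝕜 𝔘 y (fun l => x (t l)) j (ultrapowerQuot 𝕜 I 𝔘 E y))‖ ≤ ε₀) →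
        ∀ (f : Fin n → ℕ), StrictMono f → (∀ l, f l < m) →
        ‖A (fun l => x (f l)) - Abar (fun _ => ultrapowerQuot 𝕜 I 𝔘 E y)‖ ≤ n * ε₀ := by
      intro x m hx f hf hfm
      set T : ℕ → 𝕜 := fun j => Abar (fun l =>
        if (l : ℕ) < j then diagonalEmbedding 𝕜 I 𝔘 E (x (f l))
        else ultrapowerQuot 𝕜 I 𝔘 E y) with hT
      have claim : ∀ j, j ≤ n → ‖T j - T 0‖ ≤ j * ε₀ := by
        intro j
        induction j with
        | zero => intro _; simp
        | succ j ihj =>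
          intro hj
          have hj' : j < n := hj
          have e1 : T (j+1) = Abar (GGaux 𝕜 𝔘 y (fun l => x (f l)) ⟨j, hj'⟩
              (diagonalEmbedding 𝕜 I 𝔘 E (x (f ⟨j, hj'⟩)))) := by
            refine congrArg Abar (funext fun l => ?_)
            by_cases h1 : (l : ℕ) < j
            · have hl : l < (⟨j, hj'⟩ : Fin n) := Fin.lt_def.2 h1
              simp [GGaux, hl, Nat.lt_succ_of_lt h1]
            · by_cases h2 : (l : ℕ) = j
              · have hl : l = (⟨j, hj'⟩ : Fin n) := Fin.ext h2
                subst hl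
                simp [GGaux, Nat.lt_succ_self]
              · have hl1 : ¬ l < (⟨j, hj'⟩ : Fin n) := by
                  rw [Fin.lt_def]; show ¬ (l : ℕ) < j; omega
                have hl2 : l ≠ (⟨j, hj'⟩ : Fin n) := by
                  intro h; exact h2 (by rw [h])
                have hl3 : ¬ (l : ℕ) < j + 1 := by omega
                simp [GGaux, hl1, hl2, hl3]
          have e2 : T j = Abar (GGaux 𝕜 𝔘 y (fun l => x (f l)) ⟨j, hj'⟩
              (ultrapowerQuot 𝕜 I 𝔘 E y)) := by
            refine congrArg Abar (funext fun l => ?_)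
            by_cases h1 : (l : ℕ) < j
            · have hl : l < (⟨j, hj'⟩ : Fin n) := Fin.lt_def.2 h1
              simp [GGaux, hl, h1]
            · have hl1 : ¬ l < (⟨j, hj'⟩ : Fin n) := by
                rw [Fin.lt_def]; show ¬ (l : ℕ) < j; omega
              by_cases h2 : l = (⟨j, hj'⟩ : Fin n)
              · simp [GGaux, hl1, h2, h1]
              · simp [GGaux, hl1, h2, h1]
          have hstep : ‖T (j+1) - T j‖ ≤ ε₀ := by
            rw [e1, e2]
            exact (hx (f ⟨j, hj'⟩) (hfm _)).2 ⟨j, hj'⟩ f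
              (fun l hl => hf (Fin.lt_def.2 hl))
          calc ‖T (j+1) - T 0‖ = ‖(T (j+1) - T j) + (T j - T 0)‖ := by
                rw [sub_add_sub_cancel]
          _ ≤ ‖T (j+1) - T j‖ + ‖T j - T 0‖ := norm_add_le _ _
          _ ≤ ε₀ + j * ε₀ := add_le_add hstep (ihj (le_of_lt hj'))
          _ = ((j+1 : ℕ) : ℝ) * ε₀ := by push_cast; ring
      have hT0 : T 0 = Abar (fun _ => ultrapowerQuot 𝕜 I 𝔘 E y) := by
        refine congrArg Abar (funext fun l => ?_)
        simp
      have hTn : T n = A (fun l => x (f l)) := by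
        have heq : (fun l : Fin n => if (l : ℕ) < n then diagonalEmbedding 𝕜 I 𝔘 E (x (f l))
            else ultrapowerQuot 𝕜 I 𝔘 E y) =
            fun l => diagonalEmbedding 𝕜 I 𝔘 E (x (f l)) :=
          funext fun l => if_pos l.isLt
        have hT' : T n = Abar (fun l : Fin n =>
            if (l : ℕ) < n then diagonalEmbedding 𝕜 I 𝔘 E (x (f l))
            else ultrapowerQuot 𝕜 I 𝔘 E y) := rfl
        rw [hT', heq]
        exact hAbar.1 (fun l => x (f l))
      rw [← hTn, ← hT0]
      have := claim n le_rfl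
      exact_mod_cast this
    -- per-m estimate
    set Pz : 𝕜 := Abar (fun _ => ultrapowerQuot 𝕜 I 𝔘 E y) with hPz
    have hmain : ∀ m : ℕ, n ≤ m → 1 ≤ m →
        ((m.descFactorial n : ℝ)) * ‖Pz‖ ≤ (m:ℝ)^n * C +
          ((m:ℝ)^n - (m.descFactorial n : ℝ)) * ‖A‖ +
          (m.descFactorial n : ℝ) * ((n:ℝ) * ε₀) := by
      intro m hnm h1m
      obtain ⟨x, hx⟩ := seq m
      have hx1 : ∀ k, k < m → ‖x k‖ ≤ 1 := fun k hk => (hx k hk).1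
      have tel' : ∀ r : Fin n → Fin m, Function.Injective r →
          ‖A (fun l => x ((r l : ℕ))) - Pz‖ ≤ (n:ℝ) * ε₀ := by
        intro r hr
        set σ := Tuple.sort r with hσ
        have hmono : Monotone (r ∘ σ) := Tuple.monotone_sort r
        have hinj : Function.Injective (r ∘ σ) := hr.comp σ.injective
        have hsm : StrictMono (r ∘ σ) := hmono.strictMono_of_injective hinj
        have hsm' : StrictMono (fun l => ((r (σ l) : ℕ))) := fun a b hab =>
          Fin.lt_def.1 (hsm hab)
        have h := tel x m hx (fun l => ((r (σ l)) : ℕ)) hsm' (fun l => (r (σ l)).isLt)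
        rwa [hsymm σ (fun l => x ((r l : ℕ)))] at h
      set TI : Finset (Fin n → Fin m) :=
        Finset.univ.filter (fun r => Function.Injective r) with hTIdef
      have hTcard : TI.card = m.descFactorial n := by
        rw [hTIdef, ← Fintype.card_subtype,
          Fintype.card_congr (Equiv.subtypeInjectiveEquivEmbedding (Fin n) (Fin m)),
          Fintype.card_embedding_eq, Fintype.card_fin, Fintype.card_fin]
      have hcard_all : (Finset.univ : Finset (Fin n → Fin m)).card = m ^ n := by
        rw [Finset.card_univ, Fintype.card_fun, Fintype.card_fin, Fintype.card_fin]
      have hTccard : (Finset.univ.filter (fun r : Fin n → Fin m =>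
          ¬ Function.Injective r)).card = m ^ n - m.descFactorial n := by
        have h := Finset.card_filter_add_card_filter_not
          (s := (Finset.univ : Finset (Fin n → Fin m)))
          (p := fun r => Function.Injective r)
        rw [hcard_all] at h
        have h2 : TI.card = m.descFactorial n := hTcard
        rw [hTIdef] at h2
        omega
      have hdle : m.descFactorial n ≤ m ^ n := Nat.descFactorial_le_pow m n
      have hS : A (fun _ => ∑ k : Fin m, x (k : ℕ)) =
          ∑ r : Fin n → Fin m, A (fun l => x ((r l : ℕ))) := by
        exact A.toMultilinearMap.map_sum (g := fun (_ : Fin n) (k : Fin m) => x (k : ℕ))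
      have hsum_le : ‖∑ k : Fin m, x (k : ℕ)‖ ≤ (m:ℝ) := by
        calc ‖∑ k : Fin m, x (k : ℕ)‖ ≤ ∑ k : Fin m, ‖x (k : ℕ)‖ := norm_sum_le _ _
        _ ≤ (Finset.univ : Finset (Fin m)).card • (1:ℝ) :=
            Finset.sum_le_card_nsmul _ _ _ (fun k _ => hx1 _ k.isLt)
        _ = (m:ℝ) := by simp
      have hmK : ((m:𝕜)) ≠ 0 := Nat.cast_ne_zero.2 (by omega)
      set eAvg : E := ((m : 𝕜))⁻¹ • ∑ k : Fin m, x (k : ℕ) with heAvgdef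
      have heAvg : ‖eAvg‖ ≤ 1 := by
        rw [heAvgdef, norm_smul, norm_inv, RCLike.norm_natCast]
        have hmpos : (0:ℝ) < (m:ℝ) := by exact_mod_cast h1m
        calc ((m:ℝ))⁻¹ * ‖∑ k : Fin m, x (k : ℕ)‖ ≤ ((m:ℝ))⁻¹ * (m:ℝ) :=
            mul_le_mul_of_nonneg_left hsum_le (inv_nonneg.2 hmpos.le)
        _ = 1 := inv_mul_cancel₀ hmpos.ne'
      have hSval : A (fun _ => ∑ k : Fin m, x (k : ℕ)) = ((m:𝕜))^n • A (fun _ => eAvg) := by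
        conv_lhs => rw [show (∑ k : Fin m, x (k : ℕ)) = (m:𝕜) • eAvg from
          (smul_inv_smul₀ hmK _).symm]
        rw [show (fun _ : Fin n => (m:𝕜) • eAvg) =
          (fun l : Fin n => (fun _ : Fin n => (m:𝕜)) l • (fun _ : Fin n => eAvg) l) from rfl]
        rw [A.map_smul_univ]
        simp [Finset.prod_const]
      have hSnorm : ‖A (fun _ => ∑ k : Fin m, x (k : ℕ))‖ ≤ (m:ℝ)^n * C := by
        rw [hSval, norm_smul, norm_pow, RCLike.norm_natCast]
        exact mul_le_mul_of_nonneg_left (hC eAvg heAvg) (by positivity)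
      have hterm : ∀ r : Fin n → Fin m, ‖A (fun l => x ((r l : ℕ)))‖ ≤ ‖A‖ := by
        intro r
        calc ‖A (fun l => x ((r l : ℕ)))‖ ≤ ‖A‖ * ∏ l, ‖x ((r l : ℕ))‖ := A.le_opNorm _
        _ ≤ ‖A‖ * 1 := mul_le_mul_of_nonneg_left
            (Finset.prod_le_one (fun l _ => norm_nonneg _) (fun l _ => hx1 _ (r l).isLt))
            (norm_nonneg _)
        _ = ‖A‖ := mul_one _
      have h1 : ((m.descFactorial n : ℝ)) * ‖Pz‖ = ‖∑ _r ∈ TI, Pz‖ := by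
        rw [Finset.sum_const, hTcard, nsmul_eq_mul, norm_mul, RCLike.norm_natCast]
      have h2 : (∑ _r ∈ TI, Pz) = (∑ r ∈ TI, (Pz - A (fun l => x ((r l : ℕ))))) +
          ∑ r ∈ TI, A (fun l => x ((r l : ℕ))) := by
        rw [← Finset.sum_add_distrib]
        simp
      have h3 : ‖∑ r ∈ TI, (Pz - A (fun l => x ((r l : ℕ))))‖ ≤
          (m.descFactorial n : ℝ) * ((n:ℝ) * ε₀) := by
        calc ‖∑ r ∈ TI, (Pz - A (fun l => x ((r l : ℕ))))‖ ≤
            ∑ r ∈ TI, ‖Pz - A (fun l => x ((r l : ℕ)))‖ := norm_sum_le _ _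
        _ ≤ TI.card • ((n:ℝ) * ε₀) := Finset.sum_le_card_nsmul _ _ _ (fun r hr => by
            rw [norm_sub_rev]
            exact tel' r (Finset.mem_filter.1 (hTIdef ▸ hr)).2)
        _ = (m.descFactorial n : ℝ) * ((n:ℝ) * ε₀) := by rw [hTcard, nsmul_eq_mul]
      have h4 : (∑ r ∈ TI, A (fun l => x ((r l : ℕ)))) =
          A (fun _ => ∑ k : Fin m, x (k : ℕ)) -
          ∑ r ∈ Finset.univ.filter (fun r : Fin n → Fin m => ¬ Function.Injective r),
            A (fun l => x ((r l : ℕ))) := by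
        have h := Finset.sum_filter_add_sum_filter_not (Finset.univ : Finset (Fin n → Fin m))
          (fun r => Function.Injective r) (fun r => A (fun l => x ((r l : ℕ))))
        rw [hS, ← h, hTIdef]
        ring
      have h5 : ‖∑ r ∈ Finset.univ.filter (fun r : Fin n → Fin m => ¬ Function.Injective r),
          A (fun l => x ((r l : ℕ)))‖ ≤ ((m:ℝ)^n - (m.descFactorial n : ℝ)) * ‖A‖ := by
        calc ‖∑ r ∈ Finset.univ.filter (fun r : Fin n → Fin m => ¬ Function.Injective r),
            A (fun l => x ((r l : ℕ)))‖ ≤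
            ∑ r ∈ Finset.univ.filter (fun r : Fin n → Fin m => ¬ Function.Injective r),
            ‖A (fun l => x ((r l : ℕ)))‖ := norm_sum_le _ _
        _ ≤ (Finset.univ.filter (fun r : Fin n → Fin m =>
            ¬ Function.Injective r)).card • ‖A‖ :=
            Finset.sum_le_card_nsmul _ _ _ (fun r _ => hterm r)
        _ = ((m:ℝ)^n - (m.descFactorial n : ℝ)) * ‖A‖ := by
            rw [hTccard, nsmul_eq_mul]
            congr 1
            push_cast [Nat.cast_sub hdle]
            ring
      calc ((m.descFactorial n : ℝ)) * ‖Pz‖ = ‖∑ _r ∈ TI, Pz‖ := h1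
      _ ≤ ‖∑ r ∈ TI, (Pz - A (fun l => x ((r l : ℕ))))‖ +
          ‖∑ r ∈ TI, A (fun l => x ((r l : ℕ)))‖ := by rw [h2]; exact norm_add_le _ _
      _ ≤ (m.descFactorial n : ℝ) * ((n:ℝ) * ε₀) +
          (‖A (fun _ => ∑ k : Fin m, x (k : ℕ))‖ +
           ‖∑ r ∈ Finset.univ.filter (fun r : Fin n → Fin m => ¬ Function.Injective r),
            A (fun l => x ((r l : ℕ)))‖) := by
          refine add_le_add h3 ?_
          rw [h4]
          exact norm_sub_le _ _
      _ ≤ (m.descFactorial n : ℝ) * ((n:ℝ) * ε₀) +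
          ((m:ℝ)^n * C + ((m:ℝ)^n - (m.descFactorial n : ℝ)) * ‖A‖) :=
          add_le_add le_rfl (add_le_add hSnorm h5)
      _ = (m:ℝ)^n * C + ((m:ℝ)^n - (m.descFactorial n : ℝ)) * ‖A‖ +
          (m.descFactorial n : ℝ) * ((n:ℝ) * ε₀) := by ring
    -- take limits in m
    set u : ℕ → ℝ := fun m => (m.descFactorial n : ℝ) / (m:ℝ)^n with hu
    have hu1 : Tendsto u atTop (𝓝 1) := by
      have hlim : Tendsto (fun m : ℕ => ∏ i ∈ Finset.range n, (1 - (i:ℝ)/(m:ℝ)))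
          atTop (𝓝 1) := by
        have h := tendsto_finset_prod (Finset.range n)
          (f := fun (i : ℕ) (m : ℕ) => 1 - (i:ℝ)/(m:ℝ)) (x := atTop)
          (a := fun _ => (1:ℝ)) (fun i _ => by
            have h0 : Tendsto (fun m : ℕ => (i:ℝ) * ((m:ℝ))⁻¹) atTop (𝓝 ((i:ℝ) * 0)) :=
              (tendsto_natCast_atTop_atTop (R := ℝ)).inv_tendsto_atTop.const_mul _
            have h1 : Tendsto (fun m : ℕ => 1 - (i:ℝ)/(m:ℝ)) atTop (𝓝 (1 - (i:ℝ) * 0)) := by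
              simp only [div_eq_mul_inv]
              exact tendsto_const_nhds.sub h0
            simpa using h1)
        simpa using h
      have heq : ∀ᶠ m : ℕ in atTop, (∏ i ∈ Finset.range n, (1 - (i:ℝ)/(m:ℝ))) = u m := by
        filter_upwards [eventually_ge_atTop n, eventually_ge_atTop 1] with m hm h1m
        have hm0 : ((m:ℝ)) ≠ 0 := Nat.cast_ne_zero.2 (by omega)
        have hd : (m.descFactorial n : ℝ) = ∏ i ∈ Finset.range n, ((m:ℝ) - (i:ℝ)) := by
          rw [Nat.descFactorial_eq_prod_range, Nat.cast_prod]
          refine Finset.prod_congr rfl fun i hi => ?_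
          have : i ≤ m := le_trans (Finset.mem_range.1 hi).le hm
          rw [Nat.cast_sub this]
        rw [hu]
        simp only
        rw [hd, show ((m:ℝ))^n = ∏ _i ∈ Finset.range n, (m:ℝ) by
          rw [Finset.prod_const, Finset.card_range], ← Finset.prod_div_distrib]
        refine Finset.prod_congr rfl fun i _ => ?_
        field_simp
      exact hlim.congr' heq
    have hineq : ∀ᶠ m : ℕ in atTop,
        u m * ‖Abar (fun _ => ultrapowerQuot 𝕜 I 𝔘 E y)‖ ≤
        C + (1 - u m) * ‖A‖ + u m * ((n:ℝ) * ε₀) := by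
      filter_upwards [eventually_ge_atTop n, eventually_ge_atTop 1] with m hm h1m
      have h := hmain m hm h1m
      have hmpos : (0:ℝ) < (m:ℝ) := by exact_mod_cast h1m
      have hp : (0:ℝ) < (m:ℝ)^n := by positivity
      rw [hu]
      simp only
      rw [div_mul_eq_mul_div, div_le_iff₀ hp]
      calc (m.descFactorial n : ℝ) * ‖Abar (fun _ => ultrapowerQuot 𝕜 I 𝔘 E y)‖ ≤
          (m:ℝ)^n * C + ((m:ℝ)^n - (m.descFactorial n : ℝ)) * ‖A‖ +
          (m.descFactorial n : ℝ) * ((n:ℝ) * ε₀) := h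
      _ = (C + (1 - (m.descFactorial n : ℝ) / (m:ℝ)^n) * ‖A‖ +
          (m.descFactorial n : ℝ) / (m:ℝ)^n * ((n:ℝ) * ε₀)) * (m:ℝ)^n := by
          field_simp
    have hL : Tendsto (fun m => u m * ‖Abar (fun _ => ultrapowerQuot 𝕜 I 𝔘 E y)‖)
        atTop (𝓝 (1 * ‖Abar (fun _ => ultrapowerQuot 𝕜 I 𝔘 E y)‖)) := hu1.mul_const _
    have hR : Tendsto (fun m => C + (1 - u m) * ‖A‖ + u m * ((n:ℝ) * ε₀)) atTop
        (𝓝 (C + (1 - 1) * ‖A‖ + 1 * ((n:ℝ) * ε₀))) :=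
      (tendsto_const_nhds.add ((tendsto_const_nhds.sub hu1).mul_const _)).add
        (hu1.mul_const _)
    have hfin := le_of_tendsto_of_tendsto hL hR hineq
    have hne : ((n:ℝ)) * (ε / n) = ε := by
      field_simp
    rw [hε₀def] at hfin
    rw [hne] at hfin
    linarith
  by_contra hcon
  push_neg at hcon
  have := main ((‖Abar (fun _ => ultrapowerQuot 𝕜 I 𝔘 E y)‖ - C) / 2) (by linarith)
  linarith

end AuxProofs
theorem iterated_polynomial_extension_preserves_sup_norm
    (𝕜 : Type*) [RCLike 𝕜] (I : Type*) [Nonempty I] (𝔘 : Ultrafilter I)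
    (E : Type*) [NormedAddCommGroup E] [NormedSpace 𝕜 E] [CompleteSpace E]
    (n : ℕ) (hn : 1 ≤ n)
    (A : ContinuousMultilinearMap 𝕜 (fun _ : Fin n => E) 𝕜)
    (hsymm : ∀ (σ : Equiv.Perm (Fin n)) (v : Fin n → E), A (fun j => v (σ j)) = A v)
    (P : E → 𝕜) (hP : ∀ x : E, P x = A (fun _ => x))
    (Abar : ContinuousMultilinearMap 𝕜 (fun _ : Fin n => Ultrapower 𝕜 I 𝔘 E) 𝕜)
    (hAbar : IsIteratedExtension A Abar)
    (Pbar : Ultrapower 𝕜 I 𝔘 E → 𝕜) (hPbar : ∀ w, Pbar w = Abar (fun _ => w)) :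
    (⨆ z : Metric.closedBall (0 : Ultrapower 𝕜 I 𝔘 E) 1, ‖Pbar (z : Ultrapower 𝕜 I 𝔘 E)‖)
      = ⨆ x : Metric.closedBall (0 : E) 1, ‖P (x : E)‖ := by
  classical
  have hball0E : (0 : E) ∈ Metric.closedBall (0 : E) 1 := by
    simp
  have hball0U : (0 : Ultrapower 𝕜 I 𝔘 E) ∈ Metric.closedBall (0 : Ultrapower 𝕜 I 𝔘 E) 1 := by
    simp
  haveI : Nonempty (Metric.closedBall (0 : E) 1) := ⟨⟨0, hball0E⟩⟩
  haveI : Nonempty (Metric.closedBall (0 : Ultrapower 𝕜 I 𝔘 E) 1) := ⟨⟨0, hball0U⟩⟩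
  have hbddE : BddAbove (Set.range fun x : Metric.closedBall (0 : E) 1 => ‖P (x : E)‖) := by
    refine ⟨‖A‖, ?_⟩
    rintro _ ⟨⟨x, hx⟩, rfl⟩
    have hx1 : ‖x‖ ≤ 1 := mem_closedBall_zero_iff.1 hx
    show ‖P x‖ ≤ ‖A‖
    rw [hP]
    calc ‖A fun _ => x‖ ≤ ‖A‖ * ∏ _l : Fin n, ‖x‖ := A.le_opNorm _
    _ ≤ ‖A‖ * 1 := mul_le_mul_of_nonneg_left
        (Finset.prod_le_one (fun _ _ => norm_nonneg _) (fun _ _ => hx1)) (norm_nonneg _)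
    _ = ‖A‖ := mul_one _
  have hbddU : BddAbove (Set.range fun z : Metric.closedBall (0 : Ultrapower 𝕜 I 𝔘 E) 1 =>
      ‖Pbar (z : Ultrapower 𝕜 I 𝔘 E)‖) := by
    refine ⟨‖Abar‖, ?_⟩
    rintro _ ⟨⟨z, hz⟩, rfl⟩
    have hz1 : ‖z‖ ≤ 1 := mem_closedBall_zero_iff.1 hz
    show ‖Pbar z‖ ≤ ‖Abar‖
    rw [hPbar]
    calc ‖Abar fun _ => z‖ ≤ ‖Abar‖ * ∏ _l : Fin n, ‖z‖ := Abar.le_opNorm _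
    _ ≤ ‖Abar‖ * 1 := mul_le_mul_of_nonneg_left
        (Finset.prod_le_one (fun _ _ => norm_nonneg _) (fun _ _ => hz1)) Abar.opNorm_nonneg
    _ = ‖Abar‖ := mul_one _
  set C : ℝ := ⨆ x : Metric.closedBall (0 : E) 1, ‖P (x : E)‖ with hCdef
  have hC : ∀ e : E, ‖e‖ ≤ 1 → ‖A (fun _ => e)‖ ≤ C := by
    intro e he
    have h := le_ciSup hbddE (⟨e, mem_closedBall_zero_iff.2 he⟩ : Metric.closedBall (0 : E) 1)
    rw [hP e] at h
    exact h
  apply le_antisymm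
  · refine ciSup_le fun z => ?_
    obtain ⟨z, hz⟩ := z
    have hz1 : ‖z‖ ≤ 1 := mem_closedBall_zero_iff.1 hz
    show ‖Pbar z‖ ≤ C
    rw [hPbar]
    have hδbound : ∀ δ : ℝ, 0 < δ → ‖Abar fun _ => z‖ ≤ (1 + δ)^n * C := by
      intro δ hδ
      have hδ1 : (0:ℝ) < 1 + δ := by linarith
      obtain ⟨w, hw, hwn⟩ := Submodule.Quotient.norm_mk_lt z hδ
      have hw1 : ‖w‖ ≤ 1 + δ := le_of_lt (lt_of_lt_of_le hwn (by linarith))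
      set c : 𝕜 := ((((1 + δ)⁻¹ : ℝ)) : 𝕜) with hc
      have hcnorm : ‖c‖ = (1 + δ)⁻¹ := by
        rw [hc, RCLike.norm_ofReal, abs_of_pos (by positivity)]
      have hy' : ∀ i, ‖(c • w) i‖ ≤ 1 := by
        intro i
        have hcoe : ((c • w : BoundedFamilies I E) : ∀ _ : I, E) i = c • (w i) := by
          rw [lp.coeFn_smul]; rfl
        rw [hcoe, norm_smul, hcnorm]
        calc (1 + δ)⁻¹ * ‖w i‖ ≤ (1 + δ)⁻¹ * (1 + δ) :=
            mul_le_mul_of_nonneg_left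
              ((lp.norm_apply_le_norm ENNReal.top_ne_zero w i).trans hw1)
              (by positivity)
        _ = 1 := inv_mul_cancel₀ hδ1.ne'
      have hkey := key_bound hn A hsymm Abar hAbar (c • w) hy' hC
      have hq : ultrapowerQuot 𝕜 I 𝔘 E (c • w) = c • z := by
        rw [← hw]
        exact Submodule.Quotient.mk_smul _ c w
      rw [hq] at hkey
      have hsc : Abar (fun _ => c • z) = c^n • Abar (fun _ => z) := by
        rw [show (fun _ : Fin n => c • z) =
          (fun l : Fin n => (fun _ : Fin n => c) l • (fun _ : Fin n => z) l) from rfl,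
          Abar.map_smul_univ]
        simp [Finset.prod_const]
      rw [hsc, norm_smul, norm_pow, hcnorm, inv_pow] at hkey
      exact (inv_mul_le_iff₀ (by positivity)).1 hkey
    have htend : Tendsto (fun δ : ℝ => (1 + δ)^n * C) (𝓝[>] 0) (𝓝 ((1 + 0)^n * C)) := by
      have hcont : Continuous fun δ : ℝ => (1 + δ)^n * C :=
        ((continuous_const.add continuous_id).pow n).mul continuous_const
      exact (hcont.tendsto 0).mono_left nhdsWithin_le_nhds
    have hev : ∀ᶠ δ in 𝓝[>] (0:ℝ), ‖Abar fun _ => z‖ ≤ (1 + δ)^n * C :=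
      eventually_nhdsWithin_of_forall fun δ hδ => hδbound δ hδ
    have := ge_of_tendsto htend hev
    simpa using this
  · refine ciSup_le fun x => ?_
    obtain ⟨x, hx⟩ := x
    have hx1 : ‖x‖ ≤ 1 := mem_closedBall_zero_iff.1 hx
    show ‖P x‖ ≤ ⨆ z : Metric.closedBall (0 : Ultrapower 𝕜 I 𝔘 E) 1, ‖Pbar (z : Ultrapower 𝕜 I 𝔘 E)‖
    have hdiag : diagonalEmbedding 𝕜 I 𝔘 E x ∈ Metric.closedBall (0 : Ultrapower 𝕜 I 𝔘 E) 1 := by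
      rw [mem_closedBall_zero_iff]
      calc ‖diagonalEmbedding 𝕜 I 𝔘 E x‖ ≤ ‖constFamily I x‖ :=
          Submodule.Quotient.norm_mk_le _ _
      _ ≤ 1 := lp.norm_le_of_forall_le zero_le_one fun i => hx1
    have hval : ‖P x‖ = ‖Pbar (diagonalEmbedding 𝕜 I 𝔘 E x)‖ := by
      rw [hP, hPbar, ← hAbar.1 (fun _ => x)]
    rw [hval]
    exact le_ciSup hbddU (⟨_, hdiag⟩ : Metric.closedBall (0 : Ultrapower 𝕜 I 𝔘 E) 1)
end
end

section
/- Let E be a Banach space over 𝕜 (𝕜 = ℝ or ℂ), n ≥ 1, A : E^n → 𝕜 a continuous n-linear form, and κ_E : E → E'' the canonical embedding into the bidual. Then there exists a unique continuous n-linear form B : (E'')^n → 𝕜 such that: (a) B(κ_E x_1, …, κ_E x_n) = A(x_1, …, x_n) for all x_1, …, x_n ∈ E; and (b) for every j with 1 ≤ j ≤ n, all x_1, …, x_{j−1} ∈ E and all z_{j+1}, …, z_n ∈ E'', the map z ↦ B(κ_E x_1, …, κ_E x_{j−1}, z, z_{j+1}, …, z_n) from E'' to 𝕜 is continuous with respect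 to the weak-star topology on E''. Moreover ‖B‖ = ‖A‖, where ‖·‖ denotes the norm of a continuous multilinear form. -/
set_option synthInstance.maxHeartbeats 1000000
set_option maxHeartbeats 1000000

open NormedSpace

/-- `B` is the *Aron–Berner extension* of the continuous `n`-linear form `A` to the
bidual: it agrees with `A` on (the image under the canonical embedding `κ_E` of) `E`,
and it is obtained by extending `A` one variable at a time, from the last variable to
the first, by weak-star continuity. -/
def IsAronBernerExtension {𝕜 E : Type*} [RCLike 𝕜] [NormedAddCommGroup E]
    [NormedSpace 𝕜 E] {n : ℕ}
    (A : ContinuousMultilinearMap 𝕜 (fun _ : Fin n => E) 𝕜)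
    (B : ContinuousMultilinearMap 𝕜 (fun _ : Fin n => StrongDual 𝕜 (StrongDual 𝕜 E)) 𝕜) : Prop :=
  (∀ x : Fin n → E, B (fun j => inclusionInDoubleDual 𝕜 E (x j)) = A x) ∧
  (∀ (j : Fin n) (x : Fin n → E) (z : Fin n → StrongDual 𝕜 (StrongDual 𝕜 E)),
    Continuous fun w : WeakDual 𝕜 (StrongDual 𝕜 E) =>
      B (fun l => if l < j then inclusionInDoubleDual 𝕜 E (x l)
        else if l = j then StrongDual.toWeakDual.symm w else z l))

section AB

variable (𝕜 : Type*) [RCLike 𝕜] (E : Type*) [NormedAddCommGroup E] [NormedSpace 𝕜 E]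

local notation "E''" => StrongDual 𝕜 (StrongDual 𝕜 E)

@[reducible]
noncomputable def abNACG : NormedAddCommGroup (StrongDual 𝕜 (StrongDual 𝕜 E)) := inferInstance

@[reducible]
noncomputable def abNS : NormedSpace 𝕜 (StrongDual 𝕜 (StrongDual 𝕜 E)) := inferInstance

@[reducible]
noncomputable def abNACG1 : NormedAddCommGroup (StrongDual 𝕜 E) := inferInstance

@[reducible]
noncomputable def abNS1 : NormedSpace 𝕜 (StrongDual 𝕜 E) := inferInstance

attribute [local instance] abNACG abNS abNACG1 abNS1

/-- One step in the construction of the Aron–Berner extension. -/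
noncomputable def abStep (n : ℕ)
    (f : E →L[𝕜] ContinuousMultilinearMap 𝕜 (fun _ : Fin n => E'') 𝕜) :
    ContinuousMultilinearMap 𝕜 (fun _ : Fin (n + 1) => E'') 𝕜 :=
  (continuousMultilinearCurryLeftEquiv 𝕜 (fun _ : Fin (n + 1) => E'') 𝕜).symm
    ((ContinuousLinearMap.compContinuousMultilinearMapL 𝕜 (fun _ : Fin n => E'')
        (StrongDual 𝕜 E) 𝕜).flip f.flipMultilinear)

lemma abStep_apply (n : ℕ)
    (f : E →L[𝕜] ContinuousMultilinearMap 𝕜 (fun _ : Fin n => E'') 𝕜)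
    (z : Fin (n + 1) → E'') :
    abStep 𝕜 E n f z = z 0 (f.flipMultilinear (Fin.tail z)) := rfl

lemma abStep_add (n : ℕ)
    (f g : E →L[𝕜] ContinuousMultilinearMap 𝕜 (fun _ : Fin n => E'') 𝕜) :
    abStep 𝕜 E n (f + g) = abStep 𝕜 E n f + abStep 𝕜 E n g := by
  ext z
  have h : (f + g).flipMultilinear (Fin.tail z)
      = f.flipMultilinear (Fin.tail z) + g.flipMultilinear (Fin.tail z) := by
    ext x
    simp [ContinuousLinearMap.flipMultilinear_apply_apply]
  simp [abStep_apply, h]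

lemma abStep_smul (n : ℕ) (c : 𝕜)
    (f : E →L[𝕜] ContinuousMultilinearMap 𝕜 (fun _ : Fin n => E'') 𝕜) :
    abStep 𝕜 E n (c • f) = c • abStep 𝕜 E n f := by
  ext z
  have h : (c • f).flipMultilinear (Fin.tail z) = c • f.flipMultilinear (Fin.tail z) := by
    ext x
    simp [ContinuousLinearMap.flipMultilinear_apply_apply]
  simp [abStep_apply, h]

lemma flipMultilinear_norm_apply_le (n : ℕ)
    (f : E →L[𝕜] ContinuousMultilinearMap 𝕜 (fun _ : Fin n => E'') 𝕜)
    (m : Fin n → E'') :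
    ‖f.flipMultilinear m‖ ≤ ‖f‖ * ∏ i, ‖m i‖ := by
  refine ContinuousLinearMap.opNorm_le_bound _ (by positivity) fun x => ?_
  rw [ContinuousLinearMap.flipMultilinear_apply_apply]
  calc ‖f x m‖ ≤ ‖f x‖ * ∏ i, ‖m i‖ := (f x).le_opNorm m
  _ ≤ (‖f‖ * ‖x‖) * ∏ i, ‖m i‖ :=
      mul_le_mul_of_nonneg_right (f.le_opNorm x)
        (Finset.prod_nonneg fun i _ => norm_nonneg _)
  _ = (‖f‖ * ∏ i, ‖m i‖) * ‖x‖ := by ring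

lemma abStep_norm_le (n : ℕ)
    (f : E →L[𝕜] ContinuousMultilinearMap 𝕜 (fun _ : Fin n => E'') 𝕜) :
    ‖abStep 𝕜 E n f‖ ≤ ‖f‖ := by
  refine ContinuousMultilinearMap.opNorm_le_bound (norm_nonneg f) fun z => ?_
  rw [abStep_apply]
  calc ‖z 0 (f.flipMultilinear (Fin.tail z))‖
      ≤ ‖z 0‖ * ‖f.flipMultilinear (Fin.tail z)‖ := (z 0).le_opNorm _
  _ ≤ ‖z 0‖ * (‖f‖ * ∏ i, ‖Fin.tail z i‖) := by
      gcongr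
      exact flipMultilinear_norm_apply_le 𝕜 E n f _
  _ = ‖f‖ * ∏ i, ‖z i‖ := by
      rw [Fin.prod_univ_succ]
      simp only [Fin.tail]
      ring

/-- The Aron–Berner extension, as a continuous linear map on continuous multilinear forms. -/
noncomputable def abExtL : (n : ℕ) →
    (ContinuousMultilinearMap 𝕜 (fun _ : Fin n => E) 𝕜 →L[𝕜]
      ContinuousMultilinearMap 𝕜 (fun _ : Fin n => E'') 𝕜)
  | 0 =>
    ((continuousMultilinearCurryFin0 𝕜 E 𝕜).trans
      (continuousMultilinearCurryFin0 𝕜 E'' 𝕜).symm).toLinearIsometry.toContinuousLinearMap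
  | (n + 1) =>
    LinearMap.mkContinuous
      { toFun := fun A => abStep 𝕜 E n ((abExtL n).comp A.curryLeft)
        map_add' := fun A B => by
          show abStep 𝕜 E n ((abExtL n).comp (A + B).curryLeft) = _
          have h : (A + B).curryLeft = A.curryLeft + B.curryLeft := rfl
          rw [h, ContinuousLinearMap.comp_add, abStep_add]
        map_smul' := fun c A => by
          show abStep 𝕜 E n ((abExtL n).comp ((c • A).curryLeft)) = _
          have h : (c • A).curryLeft = c • A.curryLeft := rfl
          rw [h, ContinuousLinearMap.comp_smulₛₗ]
          simp only [RingHom.id_apply]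
          rw [abStep_smul] }
      ‖abExtL n‖
      (fun A => by
        refine (abStep_norm_le 𝕜 E n _).trans ?_
        calc ‖(abExtL n).comp A.curryLeft‖ ≤ ‖abExtL n‖ * ‖A.curryLeft‖ :=
              ContinuousLinearMap.opNorm_comp_le _ _
        _ = ‖abExtL n‖ * ‖A‖ := by rw [A.curryLeft_norm])

lemma abExtL_zero_apply (A : ContinuousMultilinearMap 𝕜 (fun _ : Fin 0 => E) 𝕜)
    (z : Fin 0 → E'') :
    abExtL 𝕜 E 0 A z = A 0 := rfl

lemma abExtL_succ_apply (n : ℕ)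
    (A : ContinuousMultilinearMap 𝕜 (fun _ : Fin (n + 1) => E) 𝕜) :
    abExtL 𝕜 E (n + 1) A = abStep 𝕜 E n ((abExtL 𝕜 E n).comp A.curryLeft) := rfl

lemma abExtL_norm_le : ∀ n : ℕ, ‖abExtL 𝕜 E n‖ ≤ 1
  | 0 => by
    refine ContinuousLinearMap.opNorm_le_bound _ zero_le_one fun A => ?_
    rw [one_mul]
    exact le_of_eq (LinearIsometry.norm_map _ A)
  | (n + 1) =>
    (LinearMap.mkContinuous_norm_le _ (norm_nonneg (abExtL 𝕜 E n)) _).trans (abExtL_norm_le n)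

lemma abExtL_apply_norm_le (n : ℕ) (A : ContinuousMultilinearMap 𝕜 (fun _ : Fin n => E) 𝕜) :
    ‖abExtL 𝕜 E n A‖ ≤ ‖A‖ := by
  calc ‖abExtL 𝕜 E n A‖ ≤ ‖abExtL 𝕜 E n‖ * ‖A‖ := (abExtL 𝕜 E n).le_opNorm A
  _ ≤ 1 * ‖A‖ := by gcongr; exact abExtL_norm_le 𝕜 E n
  _ = ‖A‖ := one_mul _

lemma abExtL_agrees : ∀ (n : ℕ) (A : ContinuousMultilinearMap 𝕜 (fun _ : Fin n => E) 𝕜)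
    (x : Fin n → E),
    abExtL 𝕜 E n A (fun j => inclusionInDoubleDual 𝕜 E (x j)) = A x
  | 0, A, x => by
    rw [abExtL_zero_apply]
    exact congrArg A (Subsingleton.elim _ _)
  | (n + 1), A, x => by
    rw [abExtL_succ_apply, abStep_apply]
    have h0 : (fun j : Fin (n + 1) => inclusionInDoubleDual 𝕜 E (x j)) 0
        = inclusionInDoubleDual 𝕜 E (x 0) := rfl
    have htail : Fin.tail (fun j : Fin (n + 1) => inclusionInDoubleDual 𝕜 E (x j))
        = fun j : Fin n => inclusionInDoubleDual 𝕜 E (Fin.tail x j) := rfl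
    rw [dual_def, ContinuousLinearMap.flipMultilinear_apply_apply,
      ContinuousLinearMap.comp_apply, htail,
      abExtL_agrees n (A.curryLeft (x 0)) (Fin.tail x), A.curryLeft_apply,
      Fin.cons_self_tail]

lemma abExtL_wsc : ∀ (n : ℕ) (A : ContinuousMultilinearMap 𝕜 (fun _ : Fin n => E) 𝕜)
    (j : Fin n) (x : Fin n → E) (z : Fin n → E''),
    Continuous fun w : WeakDual 𝕜 (StrongDual 𝕜 E) =>
      abExtL 𝕜 E n A (fun l => if l < j then inclusionInDoubleDual 𝕜 E (x l)
        else if l = j then StrongDual.toWeakDual.symm w else z l)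
  | 0, A, j, x, z => j.elim0
  | (n + 1), A, j, x, z => by
    rcases Fin.eq_zero_or_eq_succ j with rfl | ⟨i, rfl⟩
    · have key : ∀ w : WeakDual 𝕜 (StrongDual 𝕜 E),
          abExtL 𝕜 E (n + 1) A (fun l => if l < 0 then inclusionInDoubleDual 𝕜 E (x l)
            else if l = 0 then StrongDual.toWeakDual.symm w else z l)
          = w (((abExtL 𝕜 E n).comp A.curryLeft).flipMultilinear
              (fun l : Fin n => z l.succ)) := by
        intro w
        rw [abExtL_succ_apply, abStep_apply]
        have ht : Fin.tail (fun l : Fin (n + 1) => if l < 0 then inclusionInDoubleDual 𝕜 E (x l)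
            else if l = 0 then StrongDual.toWeakDual.symm w else z l)
            = fun l : Fin n => z l.succ := by
          funext l
          simp [Fin.tail, Fin.lt_def, Fin.ext_iff]
        rw [ht, if_neg (lt_irrefl _), if_pos rfl]
        rfl
      simp only [key]
      exact WeakDual.eval_continuous _
    · have key : ∀ w : WeakDual 𝕜 (StrongDual 𝕜 E),
          abExtL 𝕜 E (n + 1) A (fun l => if l < i.succ then inclusionInDoubleDual 𝕜 E (x l)
            else if l = i.succ then StrongDual.toWeakDual.symm w else z l)
          = abExtL 𝕜 E n (A.curryLeft (x 0))
              (fun l => if l < i then inclusionInDoubleDual 𝕜 E ((fun m : Fin n => x m.succ) l)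
                else if l = i then StrongDual.toWeakDual.symm w
                else (fun m : Fin n => z m.succ) l) := by
        intro w
        rw [abExtL_succ_apply, abStep_apply, if_pos (Fin.succ_pos i), dual_def,
          ContinuousLinearMap.flipMultilinear_apply_apply, ContinuousLinearMap.comp_apply]
        congr 1
        funext l
        simp [Fin.tail, Fin.succ_lt_succ_iff, Fin.succ_inj]
      simp only [key]
      exact abExtL_wsc n (A.curryLeft (x 0)) i (fun m => x m.succ) (fun m => z m.succ)

lemma exists_preimage (z : E'') (I : Finset (StrongDual 𝕜 E)) :
    ∃ x : E, ∀ f ∈ I, f x = z f := by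
  classical
  set T : E →ₗ[𝕜] (↥I → 𝕜) :=
    LinearMap.pi (fun i : ↥I => ((i : StrongDual 𝕜 E) : E →ₗ[𝕜] 𝕜)) with hT
  set W := LinearMap.range T with hW
  set p : ↥I → 𝕜 := fun i => z (i : StrongDual 𝕜 E) with hp
  by_cases hpW : p ∈ W
  · obtain ⟨x, hx⟩ := hpW
    refine ⟨x, fun f hf => ?_⟩
    have := congrFun hx ⟨f, hf⟩
    simpa [hT, hp] using this
  · exfalso
    have h1 : (Submodule.Quotient.mk p : (↥I → 𝕜) ⧸ W) ≠ 0 := by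
      simpa [Submodule.Quotient.mk_eq_zero] using hpW
    have h2 : ∃ φ : Module.Dual 𝕜 ((↥I → 𝕜) ⧸ W), φ (Submodule.Quotient.mk p) ≠ 0 := by
      by_contra h
      push_neg at h
      exact h1 ((Module.forall_dual_apply_eq_zero_iff 𝕜 _).mp h)
    obtain ⟨φ, hφ⟩ := h2
    set g : (↥I → 𝕜) →ₗ[𝕜] 𝕜 := φ ∘ₗ W.mkQ with hg
    have hgW : ∀ v ∈ W, g v = 0 := by
      intro v hv
      have hv0 : W.mkQ v = 0 := by
        rw [Submodule.mkQ_apply]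
        exact (Submodule.Quotient.mk_eq_zero W).mpr hv
      simp [hg, hv0]
    have hgrep : ∀ v : ↥I → 𝕜, g v = ∑ i, v i * g (Pi.single i 1) := by
      intro v
      conv_lhs => rw [← Finset.univ_sum_single v]
      rw [map_sum]
      refine Finset.sum_congr rfl fun i _ => ?_
      have hsingle : Pi.single i (v i) = v i • (Pi.single i (1 : 𝕜) : ↥I → 𝕜) := by
        funext t
        rcases eq_or_ne t i with rfl | h
        · simp
        · simp [h]
      rw [hsingle, map_smul, smul_eq_mul]
    set F : StrongDual 𝕜 E := ∑ i : ↥I, g (Pi.single i 1) • (i : StrongDual 𝕜 E) with hF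
    have hTW : ∀ x : E, T x ∈ W := fun x => ⟨x, rfl⟩
    have hFx : ∀ x : E, F x = g (T x) := by
      intro x
      rw [hgrep (T x)]
      rw [hF]
      simp only [ContinuousLinearMap.coe_sum', Finset.sum_apply,
        ContinuousLinearMap.coe_smul', Pi.smul_apply, smul_eq_mul]
      refine Finset.sum_congr rfl fun i _ => ?_
      have hTxi : T x i = (i : StrongDual 𝕜 E) x := rfl
      rw [hTxi, mul_comm]
    have hF0 : F = 0 := by
      ext x
      rw [hFx x, hgW _ (hTW x)]
      rfl
    have hzF : z F = 0 := by rw [hF0, map_zero]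
    have hzF' : z F = g p := by
      rw [hF, map_sum]
      simp only [map_smul, smul_eq_mul]
      rw [hgrep p]
      refine Finset.sum_congr rfl fun i _ => ?_
      have hpi : p i = z (i : StrongDual 𝕜 E) := rfl
      rw [hpi, mul_comm]
    have hgp : g p = 0 := by rw [← hzF', hzF]
    refine hφ ?_
    have : φ (W.mkQ p) = 0 := hgp
    rwa [Submodule.mkQ_apply] at this

lemma denseRange_kappa :
    DenseRange (fun x : E =>
      StrongDual.toWeakDual (inclusionInDoubleDual 𝕜 E x)) := by
  have hinj : Function.Injective (topDualPairing 𝕜 (StrongDual 𝕜 E)) :=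
    ContinuousLinearMap.coe_injective
  have hemb : Topology.IsEmbedding (fun (x : WeakDual 𝕜 (StrongDual 𝕜 E)) (y : StrongDual 𝕜 E) =>
      topDualPairing 𝕜 (StrongDual 𝕜 E) x y) := WeakBilin.isEmbedding (B := topDualPairing 𝕜 (StrongDual 𝕜 E)) hinj
  intro z
  rw [hemb.closure_eq_preimage_closure_image, Set.mem_preimage, mem_closure_iff]
  intro o ho hzo
  obtain ⟨I, u, hu, hsub⟩ := isOpen_pi_iff.mp ho _ hzo
  obtain ⟨x, hx⟩ := exists_preimage 𝕜 E z I
  refine ⟨_, hsub ?_, Set.mem_image_of_mem _ (Set.mem_range_self x)⟩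
  refine Set.mem_pi.mpr fun f hfI => ?_
  have hf : f ∈ I := Finset.mem_coe.mp hfI
  have heq : topDualPairing 𝕜 (StrongDual 𝕜 E)
      (StrongDual.toWeakDual (inclusionInDoubleDual 𝕜 E x)) f
      = topDualPairing 𝕜 (StrongDual 𝕜 E) z f := by
    show f x = z f
    exact hx f hf
  show topDualPairing 𝕜 (StrongDual 𝕜 E)
      (StrongDual.toWeakDual (inclusionInDoubleDual 𝕜 E x)) f ∈ u f
  rw [heq]
  exact (hu f hf).2

lemma ab_unique {n : ℕ} (A : ContinuousMultilinearMap 𝕜 (fun _ : Fin n => E) 𝕜)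
    (B₁ B₂ : ContinuousMultilinearMap 𝕜 (fun _ : Fin n => E'') 𝕜)
    (h₁ : IsAronBernerExtension A B₁) (h₂ : IsAronBernerExtension A B₂) : B₁ = B₂ := by
  have main : ∀ k : ℕ, k ≤ n → ∀ (x : Fin n → E) (z : Fin n → E''),
      B₁ (fun l => if (l : ℕ) < n - k then inclusionInDoubleDual 𝕜 E (x l) else z l) =
      B₂ (fun l => if (l : ℕ) < n - k then inclusionInDoubleDual 𝕜 E (x l) else z l) := by
    intro k
    induction k with
    | zero =>
      intro _ x z
      have h : (fun l : Fin n => if (l : ℕ) < n - 0 then inclusionInDoubleDual 𝕜 E (x l) else z l)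
          = fun l => inclusionInDoubleDual 𝕜 E (x l) :=
        funext fun l => if_pos (by omega)
      rw [h, h₁.1, h₂.1]
    | succ k ih =>
      intro hk x z
      have hkn : k ≤ n := Nat.le_of_succ_le hk
      have hjlt : n - (k + 1) < n := by omega
      set j : Fin n := ⟨n - (k + 1), hjlt⟩ with hj
      have hjval : (j : ℕ) = n - (k + 1) := rfl
      have hc₁ := h₁.2 j x z
      have hc₂ := h₂.2 j x z
      have heqOn : Set.EqOn
          (fun w : WeakDual 𝕜 (StrongDual 𝕜 E) =>
            B₁ (fun l => if l < j then inclusionInDoubleDual 𝕜 E (x l)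
              else if l = j then StrongDual.toWeakDual.symm w else z l))
          (fun w : WeakDual 𝕜 (StrongDual 𝕜 E) =>
            B₂ (fun l => if l < j then inclusionInDoubleDual 𝕜 E (x l)
              else if l = j then StrongDual.toWeakDual.symm w else z l))
          (Set.range fun x : E =>
            StrongDual.toWeakDual (inclusionInDoubleDual 𝕜 E x)) := by
        rintro _ ⟨y, rfl⟩
        have harg : (fun l : Fin n => if l < j then inclusionInDoubleDual 𝕜 E (x l)
            else if l = j then StrongDual.toWeakDual.symm
              (StrongDual.toWeakDual (inclusionInDoubleDual 𝕜 E y)) else z l)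
            = fun l : Fin n => if (l : ℕ) < n - k
                then inclusionInDoubleDual 𝕜 E (Function.update x j y l) else z l := by
          funext l
          rcases lt_trichotomy (l : ℕ) ((j : Fin n) : ℕ) with hl | hl | hl
          · rw [if_pos (Fin.lt_def.mpr hl), if_pos (by omega),
              Function.update_of_ne (Fin.ne_of_val_ne (by omega))]
          · have hlj : l = j := Fin.ext hl
            rw [if_neg (by simp only [Fin.lt_def]; omega), if_pos hlj,
              LinearEquiv.symm_apply_apply, if_pos (by omega), hlj, Function.update_self]
          · rw [if_neg (by simp only [Fin.lt_def]; omega),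
              if_neg (Fin.ne_of_val_ne (by omega)), if_neg (by omega)]
        show B₁ _ = B₂ _
        rw [harg]
        exact ih hkn (Function.update x j y) z
      have hfun := Continuous.ext_on (denseRange_kappa 𝕜 E) hc₁ hc₂ heqOn
      have hpt := congrFun hfun (StrongDual.toWeakDual (z j))
      have harg2 : (fun l : Fin n => if l < j then inclusionInDoubleDual 𝕜 E (x l)
          else if l = j then StrongDual.toWeakDual.symm
            (StrongDual.toWeakDual (z j)) else z l)
          = fun l : Fin n => if (l : ℕ) < n - (k + 1) then inclusionInDoubleDual 𝕜 E (x l) else z l := by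
        funext l
        rcases lt_trichotomy (l : ℕ) ((j : Fin n) : ℕ) with hl | hl | hl
        · rw [if_pos (Fin.lt_def.mpr hl), if_pos (by omega)]
        · have hlj : l = j := Fin.ext hl
          rw [if_neg (by simp only [Fin.lt_def]; omega), if_pos hlj,
            LinearEquiv.symm_apply_apply, if_neg (by omega), hlj]
        · rw [if_neg (by simp only [Fin.lt_def]; omega),
            if_neg (Fin.ne_of_val_ne (by omega)), if_neg (by omega)]
      simp only [harg2] at hpt
      exact hpt
  ext z
  have h := main n le_rfl (fun _ => 0) z
  have harg : (fun l : Fin n =>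
      if (l : ℕ) < n - n then inclusionInDoubleDual 𝕜 E ((fun _ => (0 : E)) l) else z l) = z := by
    funext l
    rw [if_neg (by omega)]
  rwa [harg] at h


end AB

theorem aronBernerExtension_existsUnique_and_isometric
    (𝕜 : Type*) [RCLike 𝕜] (E : Type*) [NormedAddCommGroup E] [NormedSpace 𝕜 E]
    [CompleteSpace E] (n : ℕ) (hn : 1 ≤ n)
    (A : ContinuousMultilinearMap 𝕜 (fun _ : Fin n => E) 𝕜) :
    (∃! B : ContinuousMultilinearMap 𝕜 (fun _ : Fin n => StrongDual 𝕜 (StrongDual 𝕜 E)) 𝕜,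
      IsAronBernerExtension A B) ∧
    (∀ B : ContinuousMultilinearMap 𝕜 (fun _ : Fin n => StrongDual 𝕜 (StrongDual 𝕜 E)) 𝕜,
      IsAronBernerExtension A B →
        (ContinuousMultilinearMap.hasOpNorm' (𝕜 := 𝕜) (ι := Fin n)
          (G := StrongDual 𝕜 (StrongDual 𝕜 E)) (G' := 𝕜)).norm B = ‖A‖) := by
  letI := abNACG 𝕜 E
  letI := abNS 𝕜 E
  letI := abNACG1 𝕜 E
  letI := abNS1 𝕜 E
  have hAB : IsAronBernerExtension A (abExtL 𝕜 E n A) :=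
    ⟨abExtL_agrees 𝕜 E n A, abExtL_wsc 𝕜 E n A⟩
  have huniq : ∀ B, IsAronBernerExtension A B → B = abExtL 𝕜 E n A :=
    fun B hB => ab_unique 𝕜 E A B _ hB hAB
  constructor
  · exact ⟨abExtL 𝕜 E n A, hAB, huniq⟩
  · intro B hB
    have hle : ‖B‖ ≤ ‖A‖ := by
      rw [huniq B hB]
      exact abExtL_apply_norm_le 𝕜 E n A
    refine le_antisymm hle ?_
    refine ContinuousMultilinearMap.opNorm_le_bound (norm_nonneg B) fun x => ?_
    rw [← hB.1 x]
    calc ‖B (fun j => inclusionInDoubleDual 𝕜 E (x j))‖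
        ≤ ‖B‖ * ∏ i, ‖inclusionInDoubleDual 𝕜 E (x i)‖ := B.le_opNorm _
    _ = ‖B‖ * ∏ i, ‖x i‖ := by
        congr 1
        exact Finset.prod_congr rfl fun i _ =>
          (inclusionInDoubleDualLi 𝕜 (E := E)).norm_map (x i)
end
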